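/- Let K = Matrix.fromBlocks A B C D with A : Matrix (Fin n) (Fin n) ℂ, D : Matrix (Fin m) (Fin m) ℂ, B : Matrix (Fin n) (Fin m) ℂ, C : Matrix (Fin m) (Fin n) ℂ, where n, m ≥ 1. Suppose λ ∈ ℂ is an eigenvalue of K (i.e., λ ∈ spectrum ℂ K) with λ ∉ spectrum ℂ A and λ ∉ spectrum ℂ D. Then 1 ≤ ‖(λ•1 − A)⁻¹‖ · ‖B‖ · ‖(λ•1 − D)⁻¹‖ · ‖C‖, where ‖·‖ denotes the ℓ²-operator norm of a matrix (the operator norm of the induced linear map between Euclidean spaces). (Two-block Feingold–Varga eigenvalue inclusion: if (x,y) is an eigenvector then x = (λ−A)⁻¹By and y = (λ−D)⁻¹Cx, so the product of the four norms is at least 1.) -/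

import Mathlib

/-- The ℓ²-operator norm of a (rectangular) complex matrix: the operator norm of
the induced linear map between Euclidean spaces. -/
noncomputable def l2OpNorm {m n : Type*} [Fintype m] [Fintype n] [DecidableEq n]
    (M : Matrix m n ℂ) : ℝ :=
  ‖LinearMap.toContinuousLinearMap (Matrix.toEuclideanLin M)‖

private lemma l2OpNorm_nonneg {m n : Type*} [Fintype m] [Fintype n] [DecidableEq n]
    (M : Matrix m n ℂ) : 0 ≤ l2OpNorm M := norm_nonneg _

private lemma mulVec_norm_le {p q : ℕ} (M : Matrix (Fin p) (Fin q) ℂ) (v : Fin q → ℂ) :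
    ‖(WithLp.equiv 2 (Fin p → ℂ)).symm (M.mulVec v)‖ ≤
      l2OpNorm M * ‖(WithLp.equiv 2 (Fin q → ℂ)).symm v‖ := by
  have h := (LinearMap.toContinuousLinearMap (Matrix.toEuclideanLin M)).le_opNorm
      ((WithLp.equiv 2 (Fin q → ℂ)).symm v)
  simpa [l2OpNorm, Matrix.toEuclideanLin_apply_piLp_toLp] using h

/-- **Two-block Feingold–Varga eigenvalue inclusion.**  If `λ` is an eigenvalue of the
block matrix `K = fromBlocks A B C D` which is an eigenvalue of neither `A` nor `D`,
then `1 ≤ ‖(λ−A)⁻¹‖·‖B‖·‖(λ−D)⁻¹‖·‖C‖` in the ℓ²-operator norm. -/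
theorem feingold_varga_two_block {n m : ℕ} (hn : 1 ≤ n) (hm : 1 ≤ m)
    (A : Matrix (Fin n) (Fin n) ℂ) (B : Matrix (Fin n) (Fin m) ℂ)
    (C : Matrix (Fin m) (Fin n) ℂ) (D : Matrix (Fin m) (Fin m) ℂ)
    (lam : ℂ) (hK : lam ∈ spectrum ℂ (Matrix.fromBlocks A B C D))
    (hA : lam ∉ spectrum ℂ A) (hD : lam ∉ spectrum ℂ D) :
    1 ≤ l2OpNorm (lam • (1 : Matrix (Fin n) (Fin n) ℂ) - A)⁻¹ * l2OpNorm B *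
        l2OpNorm (lam • (1 : Matrix (Fin m) (Fin m) ℂ) - D)⁻¹ * l2OpNorm C := by
  classical
  set K := Matrix.fromBlocks A B C D with hKdef
  -- invertibility of the diagonal blocks shifted by lam
  have hAu : IsUnit (lam • (1 : Matrix (Fin n) (Fin n) ℂ) - A) := by
    have := spectrum.notMem_iff.mp hA
    rwa [Algebra.algebraMap_eq_smul_one] at this
  have hDu : IsUnit (lam • (1 : Matrix (Fin m) (Fin m) ℂ) - D) := by
    have := spectrum.notMem_iff.mp hD
    rwa [Algebra.algebraMap_eq_smul_one] at this
  have hAdet : IsUnit (lam • (1 : Matrix (Fin n) (Fin n) ℂ) - A).det :=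
    (Matrix.isUnit_iff_isUnit_det _).mp hAu
  have hDdet : IsUnit (lam • (1 : Matrix (Fin m) (Fin m) ℂ) - D).det :=
    (Matrix.isUnit_iff_isUnit_det _).mp hDu
  -- the shifted big matrix is singular, hence has a kernel vector
  have hKu : ¬ IsUnit (lam • (1 : Matrix (Fin n ⊕ Fin m) (Fin n ⊕ Fin m) ℂ) - K) := by
    have := spectrum.mem_iff.mp hK
    rwa [Algebra.algebraMap_eq_smul_one] at this
  have hdet : (lam • (1 : Matrix (Fin n ⊕ Fin m) (Fin n ⊕ Fin m) ℂ) - K).det = 0 := by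
    by_contra h
    exact hKu ((Matrix.isUnit_iff_isUnit_det _).mpr (isUnit_iff_ne_zero.mpr h))
  obtain ⟨v, hv0, hv⟩ := Matrix.exists_mulVec_eq_zero_iff.mpr hdet
  set x : Fin n → ℂ := v ∘ Sum.inl with hxdef
  set y : Fin m → ℂ := v ∘ Sum.inr with hydef
  have hvel : v = Sum.elim x y := by funext i; cases i <;> rfl
  -- K.mulVec v = lam • v
  have hKv : K.mulVec v = lam • v := by
    have h : lam • v - K.mulVec v = 0 := by
      rw [← hv, Matrix.sub_mulVec, Matrix.smul_mulVec, Matrix.one_mulVec]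
    exact (sub_eq_zero.mp h).symm
  have hblock : K.mulVec (Sum.elim x y) =
      Sum.elim (A.mulVec x + B.mulVec y) (C.mulVec x + D.mulVec y) := by
    rw [hKdef, Matrix.fromBlocks_mulVec]
    simp
  rw [hvel, hblock] at hKv
  have h1 : A.mulVec x + B.mulVec y = lam • x := by
    funext i; simpa using congrFun hKv (Sum.inl i)
  have h2 : C.mulVec x + D.mulVec y = lam • y := by
    funext i; simpa using congrFun hKv (Sum.inr i)
  have hx : (lam • (1 : Matrix (Fin n) (Fin n) ℂ) - A).mulVec x = B.mulVec y := by
    rw [Matrix.sub_mulVec, Matrix.smul_mulVec, Matrix.one_mulVec, ← h1]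
    abel
  have hy : (lam • (1 : Matrix (Fin m) (Fin m) ℂ) - D).mulVec y = C.mulVec x := by
    rw [Matrix.sub_mulVec, Matrix.smul_mulVec, Matrix.one_mulVec, ← h2]
    abel
  have hxinv : x = (lam • (1 : Matrix (Fin n) (Fin n) ℂ) - A)⁻¹.mulVec (B.mulVec y) := by
    rw [← hx, Matrix.mulVec_mulVec, Matrix.nonsing_inv_mul _ hAdet, Matrix.one_mulVec]
  have hyinv : y = (lam • (1 : Matrix (Fin m) (Fin m) ℂ) - D)⁻¹.mulVec (C.mulVec x) := by
    rw [← hy, Matrix.mulVec_mulVec, Matrix.nonsing_inv_mul _ hDdet, Matrix.one_mulVec]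
  -- x is nonzero
  have hxne : x ≠ 0 := by
    intro hx0
    apply hv0
    have hy0 : y = 0 := by
      rw [hyinv, hx0]
      simp [Matrix.mulVec_zero]
    funext i
    cases i with
    | inl i => exact congrFun hx0 i
    | inr i => exact congrFun hy0 i
  -- norms
  set PA := l2OpNorm (lam • (1 : Matrix (Fin n) (Fin n) ℂ) - A)⁻¹
  set PB := l2OpNorm B
  set PD := l2OpNorm (lam • (1 : Matrix (Fin m) (Fin m) ℂ) - D)⁻¹
  set PC := l2OpNorm C
  set X := (WithLp.equiv 2 (Fin n → ℂ)).symm x with hXdef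
  set Y := (WithLp.equiv 2 (Fin m → ℂ)).symm y with hYdef
  have hXnorm : ‖X‖ ≤ PA * (PB * ‖Y‖) := by
    have t1 := mulVec_norm_le (lam • (1 : Matrix (Fin n) (Fin n) ℂ) - A)⁻¹ (B.mulVec y)
    rw [← hxinv] at t1
    have t2 := mulVec_norm_le B y
    calc ‖X‖ ≤ PA * ‖(WithLp.equiv 2 (Fin n → ℂ)).symm (B.mulVec y)‖ := t1
      _ ≤ PA * (PB * ‖Y‖) := mul_le_mul_of_nonneg_left t2 (l2OpNorm_nonneg _)
  have hYnorm : ‖Y‖ ≤ PD * (PC * ‖X‖) := by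
    have t1 := mulVec_norm_le (lam • (1 : Matrix (Fin m) (Fin m) ℂ) - D)⁻¹ (C.mulVec x)
    rw [← hyinv] at t1
    have t2 := mulVec_norm_le C x
    calc ‖Y‖ ≤ PD * ‖(WithLp.equiv 2 (Fin m → ℂ)).symm (C.mulVec x)‖ := t1
      _ ≤ PD * (PC * ‖X‖) := mul_le_mul_of_nonneg_left t2 (l2OpNorm_nonneg _)
  have hXpos : 0 < ‖X‖ := by
    rw [norm_pos_iff]
    intro h
    exact hxne (by simpa [hXdef] using congrArg (WithLp.equiv 2 (Fin n → ℂ)) h)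
  have key : ‖X‖ ≤ (PA * PB * PD * PC) * ‖X‖ := by
    calc ‖X‖ ≤ PA * (PB * ‖Y‖) := hXnorm
      _ ≤ PA * (PB * (PD * (PC * ‖X‖))) := by
          apply mul_le_mul_of_nonneg_left _ (l2OpNorm_nonneg _)
          exact mul_le_mul_of_nonneg_left hYnorm (l2OpNorm_nonneg _)
      _ = (PA * PB * PD * PC) * ‖X‖ := by ring
  exact (le_mul_iff_one_le_left hXpos).mp key
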